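/- Let n and k be integers with 2 ≤ k and k + 2 ≤ n. Define F : List ℤ → ℤ × ℤ by F [] = (1, 0) and F (a :: l) = (a * (F l).1 − (F l).2, (F l).1). Let L be the list of integers n :: 5 :: (replicate (n−k−2) 2 ++ (6 :: replicate (k−2) 2)). Then F L = (16n²k − 16nk² − 12n² + 4k² + 8n − 2, 16nk − 16k² − 12n + 4k + 5). -/

import Mathlib

/-- Numerator/denominator of a Hirzebruch–Jung (negative) continued fraction:
`F [] = (1, 0)` and `F (a :: l) = (a * (F l).1 − (F l).2, (F l).1)`. -/
def F : List ℤ → ℤ × ℤ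
  | [] => (1, 0)
  | a :: l => (a * (F l).1 - (F l).2, (F l).1)

lemma F_replicate_two (m : ℕ) (l : List ℤ) :
    F (List.replicate m 2 ++ l) =
      ((m + 1) * (F l).1 - m * (F l).2, m * (F l).1 - ((m : ℤ) - 1) * (F l).2) := by
  induction m with
  | zero => simp
  | succ m ih =>
    simp only [List.replicate_succ, List.cons_append, F, List.append_eq, ih]
    push_cast
    simp only [Prod.mk.injEq]; constructor <;> ring

/-- The negative continued fraction of the reversed plumbing
coefficients `[2^{k−2}, 6, 2^{n−k−2}, 5, n]` evaluates to the lens space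
parameters of Theorem 4. -/
theorem continued_fraction_evaluation (n k : ℕ) (hk : 2 ≤ k) (hn : k + 2 ≤ n) :
    F ((n : ℤ) :: 5 :: (List.replicate (n - k - 2) 2 ++ (6 :: List.replicate (k - 2) 2))) =
      (16 * (n : ℤ) ^ 2 * k - 16 * n * k ^ 2 - 12 * n ^ 2 + 4 * k ^ 2 + 8 * n - 2,
        16 * (n : ℤ) * k - 16 * k ^ 2 - 12 * n + 4 * k + 5) := by
  have h1 : F (List.replicate (k - 2) 2) = ((k : ℤ) - 1, (k : ℤ) - 2) := by
    have := F_replicate_two (k - 2) []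
    simp only [List.append_nil] at this
    rw [this]
    have hc : ((k - 2 : ℕ) : ℤ) = (k : ℤ) - 2 := by
      push_cast [Nat.cast_sub hk]; ring
    simp [F, hc]; ring
  have h2 : F (6 :: List.replicate (k - 2) 2) = (5 * (k : ℤ) - 4, (k : ℤ) - 1) := by
    simp only [F, h1]; simp only [Prod.mk.injEq]; exact ⟨by ring, trivial⟩
  have hm : ((n - k - 2 : ℕ) : ℤ) = (n : ℤ) - k - 2 := by
    have : k + 2 ≤ n := hn
    omega
  have h3 := F_replicate_two (n - k - 2) (6 :: List.replicate (k - 2) 2)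
  rw [h2] at h3
  simp only [F, h3, hm]
  simp only [Prod.mk.injEq]; constructor <;> ring
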